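/- A sequence α : ℕ → ℤ is a stabilizer (i.e., for every periodic function u : ℤ → ℂ the sequence k ↦ u(α_k) is eventually constant) if and only if α represents a polyadic number, i.e., α ≡ Sα where S is the shift (Sα)_k = α_{k+1} and ≡ is the congruence in the ring of integer sequences. -/
import Mathlib


/-- A sequence `α : ℕ → ℤ` is a stabilizer: for every periodic function
`u : ℤ → ℂ` the sequence `k ↦ u (α k)` is eventually constant. -/
def IsStabilizer (α : ℕ → ℤ) : Prop :=
  ∀ u : ℤ → ℂ, (∃ p : ℤ, 0 < p ∧ Function.Periodic u p) →
    ∃ v : ℂ, ∀ᶠ k in Filter.cofinite, u (α k) = v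

/-- `α ≡ Sα`: for every positive integer `n`, `n ∣ α k − α (k+1)` for all but
finitely many `k`; i.e. `α` represents a polyadic number. -/
def RepsPolyadic (α : ℕ → ℤ) : Prop :=
  ∀ n : ℤ, 0 < n → ∀ᶠ k in Filter.cofinite, n ∣ α k - α (k + 1)

private lemma periodic_eq_of_dvd {u : ℤ → ℂ} {p : ℤ} (hp : Function.Periodic u p)
    {a b : ℤ} (h : p ∣ b - a) : u b = u a := by
  obtain ⟨m, hm⟩ := h
  have hb : b = a + m * p := by linarith
  rw [hb]
  exact (hp.int_mul m) a

/-- A sequence of integers is a stabilizer if and only if it represents a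
polyadic number. -/
theorem isStabilizer_iff_repsPolyadic (α : ℕ → ℤ) :
    IsStabilizer α ↔ RepsPolyadic α := by
  constructor
  · intro hS n hn
    set u : ℤ → ℂ := fun x => ((x % n : ℤ) : ℂ) with hu
    have hper : Function.Periodic u n := by
      intro x
      simp only [hu]
      norm_cast
      exact Int.add_mul_emod_self_left (a := x) (b := n) (c := 1) ▸ by ring_nf
    obtain ⟨v, hv⟩ := hS u ⟨n, hn, hper⟩
    rw [Nat.cofinite_eq_atTop] at hv ⊢
    obtain ⟨N, hN⟩ := Filter.eventually_atTop.mp hv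
    refine Filter.eventually_atTop.mpr ⟨N, fun k hk => ?_⟩
    have h1 : u (α k) = u (α (k + 1)) := by
      rw [hN k hk, hN (k + 1) (by omega)]
    simp only [hu] at h1
    have h2 : α k % n = α (k + 1) % n := by exact_mod_cast h1
    exact Int.ModEq.dvd (Int.ModEq.symm h2)
  · intro hP u ⟨p, hp, hper⟩
    have := hP p hp
    rw [Nat.cofinite_eq_atTop] at this ⊢
    obtain ⟨N, hN⟩ := Filter.eventually_atTop.mp this
    refine ⟨u (α N), Filter.eventually_atTop.mpr ⟨N, fun k hk => ?_⟩⟩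
    induction k, hk using Nat.le_induction with
    | base => rfl
    | succ k hk ih =>
      rw [← ih]
      exact periodic_eq_of_dvd hper (dvd_sub_comm.mp (hN k hk))
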